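/- arXiv:2409.12407 — 3 statements merged into one kernel-verified Lean document; each statement's English description precedes it below -/
import Mathlib

section
/- For the system ẋ_i = Σ_{j∈N_i} a_{ij}(x_i − x_j) x_i x_j with initial condition in ℝⁿ₊, every solution is bounded: 0 ≤ x_i(t) ≤ Σ_j x_j(0) for all i and all t ≥ 0. -/
open Filter Topology Finset

/-- Every solution starting in the nonnegative orthant is bounded:
`0 ≤ x_i(t) ≤ Σ_j x_j(0)` for all `t ≥ 0`. -/
theorem solutions_bounded (n : ℕ) (a : Fin n → Fin n → ℝ)
    (hsymm : ∀ i j, a i j = a j i) (hnonneg : ∀ i j, 0 ≤ a i j)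
    (hdiag : ∀ i, a i i = 0)
    (x : ℝ → Fin n → ℝ)
    (hx : ∀ t i, HasDerivAt (fun s => x s i)
      (∑ j, a i j * (x t i - x t j) * (x t i * x t j)) t)
    (h0 : ∀ i, 0 ≤ x 0 i) :
    ∀ t ≥ (0 : ℝ), ∀ i, 0 ≤ x t i ∧ x t i ≤ ∑ j, x 0 j := by
  have hxc : ∀ i, Continuous fun t => x t i := fun i =>
    Differentiable.continuous (fun t => (hx t i).differentiableAt)
  set f : Fin n → ℝ → ℝ := fun i t => ∑ j, a i j * (x t i - x t j) * x t j with hfdef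
  have hfc : ∀ i, Continuous (f i) := by
    intro i
    apply continuous_finset_sum
    intro j _
    exact (continuous_const.mul ((hxc i).sub (hxc j))).mul (hxc j)
  have hderiv : ∀ i t, HasDerivAt (fun s => x s i) (f i t * x t i) t := by
    intro i t
    convert hx t i using 1
    simp only [hfdef, Finset.sum_mul]
    exact Finset.sum_congr rfl fun j _ => by ring
  -- Nonnegativity for all times
  have hnon : ∀ t i, 0 ≤ x t i := by
    intro t i
    set F : ℝ → ℝ := fun u => ∫ s in (0:ℝ)..u, f i s with hFdef
    have hF : ∀ u, HasDerivAt F (f i u) u := fun u =>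
      ((hfc i).integral_hasStrictDerivAt 0 u).hasDerivAt
    have hconst : ∀ u v, x u i * Real.exp (-(F u)) = x v i * Real.exp (-(F v)) := by
      apply is_const_of_deriv_eq_zero
      · intro u
        exact ((hderiv i u).mul ((hF u).neg.exp)).differentiableAt
      · intro u
        have h := (hderiv i u).mul ((hF u).neg.exp)
        have h' : HasDerivAt (fun s => x s i * Real.exp (-F s)) _ u := h
        rw [h'.deriv]
        ring
    have hF0 : F 0 = 0 := intervalIntegral.integral_same
    have h1 := hconst t 0
    rw [hF0] at h1
    simp only [neg_zero, Real.exp_zero, mul_one] at h1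
    have h2 : x t i = x 0 i * Real.exp (F t) := by
      have hpos : Real.exp (-(F t)) ≠ 0 := (Real.exp_pos _).ne'
      field_simp [Real.exp_neg] at h1 ⊢
      rw [← h1, mul_assoc, ← Real.exp_add, neg_add_cancel, Real.exp_zero, mul_one]
    rw [h2]
    exact mul_nonneg (h0 i) (Real.exp_pos _).le
  -- Conservation of the sum
  have hSconst : ∀ t, ∑ j, x t j = ∑ j, x 0 j := by
    have hS : ∀ t, HasDerivAt (fun s => ∑ j, x s j) 0 t := by
      intro t
      have h := HasDerivAt.fun_sum (fun j (_ : j ∈ Finset.univ) => hx t j)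
      refine h.congr_deriv ?_
      have h1 : ∀ i j : Fin n, a i j * (x t i - x t j) * (x t i * x t j)
          + a j i * (x t j - x t i) * (x t j * x t i) = 0 := by
        intro i j; rw [hsymm]; ring
      have hswap : (∑ i, ∑ j, a i j * (x t i - x t j) * (x t i * x t j))
          = ∑ i, ∑ j, a j i * (x t j - x t i) * (x t j * x t i) :=
        Finset.sum_comm
      have h2 : (∑ i, ∑ j, (a i j * (x t i - x t j) * (x t i * x t j)
          + a j i * (x t j - x t i) * (x t j * x t i))) = 0 := by
        simp [h1]
      rw [Finset.sum_congr rfl (fun i _ => Finset.sum_add_distrib),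
        Finset.sum_add_distrib, ← hswap] at h2
      linarith
    intro t
    exact is_const_of_deriv_eq_zero (fun u => (hS u).differentiableAt)
      (fun u => (hS u).deriv) t 0
  intro t _ i
  refine ⟨hnon t i, ?_⟩
  calc x t i ≤ ∑ j, x t j :=
        Finset.single_le_sum (fun j _ => hnon t j) (Finset.mem_univ i)
    _ = ∑ j, x 0 j := hSconst t
end

section
/- Consider two agents (n = 2) with a_{12} = a_{21} = a > 0, so ẋ₁ = a(x₁ − x₂)x₁x₂ and ẋ₂ = a(x₂ − x₁)x₁x₂. If x₁(0) > x₂(0) ≥ 0, then x₁(t) − x₂(t) is nondecreasing in t, x₂(t) → 0 and x₁(t) → x₁(0) + x₂(0) as t → ∞. -/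
open Filter Topology

/-- Solution formula for a scalar linear ODE `f' = g f` with continuous coefficient. -/
lemma lin_ode_formula (f g : ℝ → ℝ) (hg : Continuous g)
    (hf : ∀ t, HasDerivAt f (g t * f t) t) (t : ℝ) :
    f t = f 0 * Real.exp (∫ τ in (0:ℝ)..t, g τ) := by
  set G : ℝ → ℝ := fun t => ∫ τ in (0:ℝ)..t, g τ with hGdef
  have hG : ∀ t, HasDerivAt G (g t) t := fun t =>
    intervalIntegral.integral_hasDerivAt_right (hg.intervalIntegrable _ _)
      (hg.stronglyMeasurableAtFilter _ _) hg.continuousAt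
  have hF : ∀ s, HasDerivAt (fun u => f u * Real.exp (-G u)) 0 s := by
    intro s
    have h := (hf s).fun_mul (((hG s).fun_neg).exp)
    refine h.congr_deriv ?_
    ring
  have hconst : f t * Real.exp (-G t) = f 0 * Real.exp (-G 0) :=
    is_const_of_deriv_eq_zero (fun s => (hF s).differentiableAt)
      (fun s => (hF s).deriv) t 0
  have hG0 : G 0 = 0 := intervalIntegral.integral_same
  rw [hG0, neg_zero, Real.exp_zero, mul_one] at hconst
  calc f t = f t * Real.exp (-G t) * Real.exp (G t) := by
        rw [mul_assoc, ← Real.exp_add]; simp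
    _ = f 0 * Real.exp (G t) := by rw [hconst]

/-- Two-agent winners-take-all: if `x₁(0) > x₂(0) ≥ 0`, the difference is nondecreasing,
the weaker agent's state tends to `0`, and the stronger agent's state tends to the total. -/
theorem two_agent_winner (a : ℝ) (ha : 0 < a) (x1 x2 : ℝ → ℝ)
    (h1 : ∀ t, HasDerivAt x1 (a * (x1 t - x2 t) * (x1 t * x2 t)) t)
    (h2 : ∀ t, HasDerivAt x2 (a * (x2 t - x1 t) * (x1 t * x2 t)) t)
    (hgt : x2 0 < x1 0) (hnn : 0 ≤ x2 0) :
    MonotoneOn (fun t => x1 t - x2 t) (Set.Ici (0 : ℝ)) ∧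
    Tendsto x2 atTop (𝓝 0) ∧
    Tendsto x1 atTop (𝓝 (x1 0 + x2 0)) := by
  set d : ℝ → ℝ := fun t => x1 t - x2 t with hddef
  set p : ℝ → ℝ := fun t => x1 t * x2 t with hpdef
  have hx1c : Continuous x1 :=
    continuous_iff_continuousAt.mpr fun t => (h1 t).differentiableAt.continuousAt
  have hx2c : Continuous x2 :=
    continuous_iff_continuousAt.mpr fun t => (h2 t).differentiableAt.continuousAt
  have hdc : Continuous d := hx1c.sub hx2c
  have hpc : Continuous p := hx1c.mul hx2c
  -- sum is conserved
  have hsum : ∀ t, x1 t + x2 t = x1 0 + x2 0 := by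
    intro t
    have hF : ∀ s, HasDerivAt (fun u => x1 u + x2 u) 0 s := by
      intro s
      have h := (h1 s).fun_add (h2 s)
      refine h.congr_deriv ?_
      ring
    exact is_const_of_deriv_eq_zero (fun s => (hF s).differentiableAt)
      (fun s => (hF s).deriv) t 0
  set s0 : ℝ := x1 0 + x2 0 with hs0def
  -- d' = (2 a p) d
  have hd' : ∀ t, HasDerivAt d ((2 * a * p t) * d t) t := by
    intro t
    have h := (h1 t).fun_sub (h2 t)
    refine h.congr_deriv ?_
    simp only [hddef, hpdef]
    ring
  -- p' = (-a d²) p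
  have hp' : ∀ t, HasDerivAt p ((-a * d t ^ 2) * p t) t := by
    intro t
    have h := (h1 t).fun_mul (h2 t)
    refine h.congr_deriv ?_
    simp only [hddef, hpdef]
    ring
  have hpeq : ∀ t, p t = p 0 * Real.exp (∫ τ in (0:ℝ)..t, -a * d τ ^ 2) :=
    lin_ode_formula p _ (continuous_const.mul (hdc.pow 2)) hp'
  have hdeq : ∀ t, d t = d 0 * Real.exp (∫ τ in (0:ℝ)..t, 2 * a * p τ) :=
    lin_ode_formula d _ (continuous_const.mul hpc) hd'
  have hd0 : 0 < d 0 := sub_pos.mpr hgt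
  have hp0 : 0 ≤ p 0 := mul_nonneg (le_of_lt (hnn.trans_lt hgt)) hnn
  have hpn : ∀ t, 0 ≤ p t := fun t => (hpeq t) ▸ mul_nonneg hp0 (Real.exp_pos _).le
  have hdp : ∀ t, 0 < d t := fun t => (hdeq t) ▸ mul_pos hd0 (Real.exp_pos _)
  -- d is monotone
  have hdm : Monotone d := by
    apply monotone_of_deriv_nonneg (fun t => (hd' t).differentiableAt)
    intro t
    rw [(hd' t).deriv]
    have := hpn t
    have := (hdp t).le
    positivity
  refine ⟨hdm.monotoneOn _, ?_⟩
  have hx2eq : ∀ t, x2 t = (s0 - d t) / 2 := by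
    intro t; have := hsum t; simp only [hddef]; linarith
  have hx1eq : ∀ t, x1 t = (s0 + d t) / 2 := by
    intro t; have := hsum t; simp only [hddef]; linarith
  by_cases h20 : x2 0 = 0
  · -- degenerate case: x2 ≡ 0
    have hp00 : p 0 = 0 := by simp [hpdef, h20]
    have hpz : ∀ t, p t = 0 := fun t => by rw [hpeq t, hp00, zero_mul]
    have hx2z : ∀ t, x2 t = 0 := by
      intro t
      have hF : ∀ s, HasDerivAt x2 0 s := by
        intro s
        have h := h2 s
        have : x1 s * x2 s = 0 := hpz s
        rw [this, mul_zero] at h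
        exact h
      have := is_const_of_deriv_eq_zero (fun s => (hF s).differentiableAt)
        (fun s => (hF s).deriv) t 0
      rw [this, h20]
    have hx1z : ∀ t, x1 t = s0 := by
      intro t; have := hsum t; rw [hx2z t] at this; linarith
    constructor
    · have : x2 = fun _ => (0:ℝ) := funext hx2z
      rw [this]; exact tendsto_const_nhds
    · have : x1 = fun _ => s0 := funext hx1z
      rw [this]; exact tendsto_const_nhds
  · -- main case: x2 0 > 0
    have h20' : 0 < x2 0 := lt_of_le_of_ne hnn (Ne.symm h20)
    have hp0' : 0 < p 0 := mul_pos (h20'.trans hgt) h20'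
    have hpp : ∀ t, 0 < p t := fun t => (hpeq t) ▸ mul_pos hp0' (Real.exp_pos _)
    have hx2pos : ∀ t, 0 < x2 t := by
      intro t
      by_contra hle
      push_neg at hle
      have hne : x2 t ≠ 0 := by
        intro h0
        have := hpp t
        rw [hpdef] at this
        simp only at this
        rw [h0, mul_zero] at this
        exact lt_irrefl _ this
      have hlt : x2 t < 0 := lt_of_le_of_ne hle hne
      have hmem : (0:ℝ) ∈ Set.uIcc (x2 t) (x2 0) :=
        Set.mem_uIcc.mpr (Or.inl ⟨hlt.le, h20'.le⟩)
      obtain ⟨c, _, hc⟩ := intermediate_value_uIcc (hx2c.continuousOn (s := Set.uIcc t 0)) hmem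
      have := hpp c
      rw [hpdef] at this
      simp only at this
      rw [hc, mul_zero] at this
      exact lt_irrefl _ this
    have hdlt : ∀ t, d t < s0 := by
      intro t
      have := hsum t
      have := hx2pos t
      simp only [hddef]
      linarith
    have hbdd : BddAbove (Set.range d) := ⟨s0, by rintro _ ⟨t, rfl⟩; exact (hdlt t).le⟩
    set L : ℝ := ⨆ t, d t with hLdef
    have hdL : Tendsto d atTop (𝓝 L) := tendsto_atTop_ciSup hdm hbdd
    have hLle : L ≤ s0 := ciSup_le fun t => (hdlt t).le
    have hdleL : ∀ t, d t ≤ L := fun t => le_ciSup hbdd t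
    have hLeq : L = s0 := by
      by_contra hne
      have hLlt : L < s0 := lt_of_le_of_ne hLle hne
      obtain ⟨ε, hεdef⟩ : ∃ ε : ℝ, ε = (s0 - L) / 2 := ⟨_, rfl⟩
      have hε : 0 < ε := by rw [hεdef]; linarith
      have hx2ge : ∀ t, ε ≤ x2 t := by
        intro t
        have h := hdleL t
        rw [hx2eq t, hεdef]
        gcongr
      have hx1ge : ∀ t, ε ≤ x1 t := by
        intro t
        have h1' := hx2ge t
        have h2' := hdp t
        simp only [hddef] at h2'
        linarith
      have hpge : ∀ t, ε * ε ≤ p t := fun t =>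
        mul_le_mul (hx1ge t) (hx2ge t) hε.le ((hε.trans_le (hx1ge t)).le)
      obtain ⟨c, hcdef⟩ : ∃ c : ℝ, c = 2 * a * (ε * ε) * d 0 := ⟨_, rfl⟩
      have hc : 0 < c := by rw [hcdef]; positivity
      -- φ t = d t - c t is monotone on [0, ∞)
      have hφmono : MonotoneOn (fun t => d t - c * t) (Set.Ici (0:ℝ)) := by
        apply monotoneOn_of_deriv_nonneg (convex_Ici 0)
        · exact (hdc.sub (continuous_const.mul continuous_id)).continuousOn
        · intro t _
          exact ((hd' t).sub ((hasDerivAt_id t).const_mul c)).differentiableAt.differentiableWithinAt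
        · intro t ht
          rw [interior_Ici] at ht
          have hder : deriv (fun u => d u - c * u) t = 2 * a * p t * d t - c := by
            have := ((hd' t).fun_sub ((hasDerivAt_id t).const_mul c)).deriv
            simpa using this
          rw [hder]
          have hd0t : d 0 ≤ d t := hdm (le_of_lt ht)
          have hpt : ε * ε ≤ p t := hpge t
          have h1' : c ≤ 2 * a * p t * d 0 := by
            rw [hcdef]
            exact mul_le_mul_of_nonneg_right
              (mul_le_mul_of_nonneg_left hpt (by positivity)) hd0.le
          have h2' : 2 * a * p t * d 0 ≤ 2 * a * p t * d t :=
            mul_le_mul_of_nonneg_left hd0t (by have := (hpp t).le; positivity)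
          linarith
      -- contradiction at time T = s0 / c
      have hs0pos : 0 < s0 := by
        have := h20'.trans hgt
        simp only [hs0def]
        linarith
      obtain ⟨T, hTdef⟩ : ∃ T : ℝ, T = s0 / c := ⟨_, rfl⟩
      have hT : 0 ≤ T := by rw [hTdef]; exact le_of_lt (div_pos hs0pos hc)
      have hkey := hφmono (Set.self_mem_Ici) (Set.mem_Ici.mpr hT) hT
      simp only [mul_zero, sub_zero] at hkey
      have hcT : c * T = s0 := by
        rw [hTdef]; field_simp
      have hdT := hdlt T
      rw [hcT] at hkey
      linarith
    constructor
    · rw [show x2 = fun t => (s0 - d t) / 2 from funext hx2eq]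
      have h : Tendsto (fun t => (s0 - d t) / 2) atTop (𝓝 ((s0 - L) / 2)) :=
        (tendsto_const_nhds.sub hdL).div_const 2
      rw [hLeq] at h
      simpa using h
    · rw [show x1 = fun t => (s0 + d t) / 2 from funext hx1eq]
      have h : Tendsto (fun t => (s0 + d t) / 2) atTop (𝓝 ((s0 + L) / 2)) :=
        (tendsto_const_nhds.add hdL).div_const 2
      rw [hLeq] at h
      have h2s : (s0 + s0) / 2 = s0 := by ring
      rwa [h2s] at h
end

section
/- Let ℓ be an agent with no neighbors among the non-vanishing agents, i.e., ẋ_ℓ = Σ_{j∈N_ℓ} a_{ℓj}(x_ℓ − x_j)x_ℓ x_j where every j ∈ N_ℓ satisfies x_j(t) → 0 as t → ∞. If x_ℓ(t) does not converge to 0, then x_ℓ(t) converges to a positive limit. (Isolated-in-the-quotient winner converges.) -/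
open Filter Topology Finset

/-- If every neighbor of agent `ℓ` has a state converging to zero but `x_ℓ(t)` does not
converge to zero, then `x_ℓ(t)` converges to a positive limit. -/
theorem isolated_winner_converges (n : ℕ) (a : Fin n → Fin n → ℝ)
    (hsymm : ∀ i j, a i j = a j i) (hnonneg : ∀ i j, 0 ≤ a i j)
    (hdiag : ∀ i, a i i = 0)
    (x : ℝ → Fin n → ℝ)
    (hx : ∀ t i, HasDerivAt (fun s => x s i)
      (∑ j, a i j * (x t i - x t j) * (x t i * x t j)) t)
    (hnn : ∀ t i, 0 ≤ x t i) (hbdd : ∃ B : ℝ, ∀ t i, x t i ≤ B)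
    (ℓ : Fin n)
    (hnbr : ∀ j, a ℓ j ≠ 0 → Tendsto (fun t => x t j) atTop (𝓝 0))
    (hℓ : ¬ Tendsto (fun t => x t ℓ) atTop (𝓝 0)) :
    ∃ c > (0 : ℝ), Tendsto (fun t => x t ℓ) atTop (𝓝 c) := by
  obtain ⟨B, hB⟩ := hbdd
  set f : ℝ → ℝ := fun t => x t ℓ with hf_def
  have hf' : ∀ t, HasDerivAt f (∑ j, a ℓ j * (x t ℓ - x t j) * (x t ℓ * x t j)) t :=
    fun t => hx t ℓ
  have hcont : Continuous f := by
    have hd : Differentiable ℝ f := fun t => (hf' t).differentiableAt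
    exact hd.continuous
  -- extract ε
  rw [Metric.tendsto_atTop] at hℓ
  push_neg at hℓ
  obtain ⟨ε, hε, hfreq⟩ := hℓ
  -- neighbors eventually small
  have hsmall : ∀ᶠ t in atTop, ∀ j, a ℓ j ≠ 0 → x t j < ε / 2 := by
    rw [Filter.eventually_all]
    intro j
    by_cases hj : a ℓ j = 0
    · exact Eventually.of_forall fun t h => absurd hj h
    · filter_upwards [(hnbr j hj).eventually_lt_const (by linarith : (0:ℝ) < ε / 2)] with t ht
      exact fun _ => ht
  obtain ⟨T, hT⟩ := eventually_atTop.mp hsmall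
  obtain ⟨t₀, ht₀T, ht₀⟩ := hfreq T
  have hft₀ : ε ≤ f t₀ := by
    have := ht₀
    rw [Real.dist_eq, sub_zero, abs_of_nonneg (hnn t₀ ℓ)] at this
    exact this
  -- derivative nonnegative whenever t ≥ T and f t ≥ ε/2
  have hderiv_nonneg : ∀ t, T ≤ t → ε / 2 ≤ f t →
      0 ≤ ∑ j, a ℓ j * (x t ℓ - x t j) * (x t ℓ * x t j) := by
    intro t hTt hft
    apply Finset.sum_nonneg
    intro j _
    by_cases hj : a ℓ j = 0
    · simp [hj]
    · have h1 : x t j < ε / 2 := hT t hTt j hj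
      have h2 : 0 ≤ x t ℓ - x t j := by
        have : x t j ≤ f t := le_trans (le_of_lt h1) hft
        simpa [hf_def] using sub_nonneg.mpr this
      exact mul_nonneg (mul_nonneg (hnonneg ℓ j) h2) (mul_nonneg (hnn t ℓ) (hnn t j))
  -- f stays above ε/2 after t₀
  have key : ∀ t, t₀ ≤ t → ε / 2 ≤ f t := by
    by_contra h
    push_neg at h
    obtain ⟨t₁, ht₁, hft₁⟩ := h
    set A : Set ℝ := {t | t₀ ≤ t ∧ f t < ε / 2} with hA
    have hne : A.Nonempty := ⟨t₁, ht₁, hft₁⟩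
    have hbd : BddBelow A := ⟨t₀, fun t ht => ht.1⟩
    set s := sInf A with hs_def
    have hs0 : t₀ ≤ s := le_csInf hne fun t ht => ht.1
    have hlt : ∀ t, t₀ ≤ t → t < s → ε / 2 ≤ f t := by
      intro t h1 h2
      by_contra hc
      push_neg at hc
      exact absurd (csInf_le hbd ⟨h1, hc⟩) (not_le.mpr h2)
    have hfs : f s ≤ ε / 2 := by
      have hsc : s ∈ closure A := csInf_mem_closure hne hbd
      have hsub : closure A ⊆ {t | f t ≤ ε / 2} :=
        closure_minimal (fun t ht => le_of_lt ht.2)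
          (isClosed_le hcont continuous_const)
      exact hsub hsc
    have hmono : MonotoneOn f (Set.Icc t₀ s) := by
      apply monotoneOn_of_deriv_nonneg (convex_Icc _ _) hcont.continuousOn
      · intro t _
        exact (hf' t).differentiableAt.differentiableWithinAt
      · intro t ht
        rw [interior_Icc] at ht
        rw [(hf' t).deriv]
        exact hderiv_nonneg t (le_trans ht₀T (le_trans (le_of_lt ht.1) le_rfl))
          (hlt t (le_of_lt ht.1) ht.2)
    have : f t₀ ≤ f s :=
      hmono (Set.left_mem_Icc.mpr hs0) (Set.right_mem_Icc.mpr hs0) hs0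
    linarith
  -- f monotone on [t₀, ∞)
  have hmono : MonotoneOn f (Set.Ici t₀) := by
    apply monotoneOn_of_deriv_nonneg (convex_Ici _) hcont.continuousOn
    · intro t _
      exact (hf' t).differentiableAt.differentiableWithinAt
    · intro t ht
      rw [interior_Ici] at ht
      rw [(hf' t).deriv]
      exact hderiv_nonneg t (le_trans ht₀T (le_of_lt ht)) (key t (le_of_lt ht))
  -- shifted function
  set F : ℝ → ℝ := fun t => f (max t t₀) with hF_def
  have hFmono : Monotone F := by
    intro s t hst
    exact hmono (Set.mem_Ici.mpr (le_max_right _ _)) (Set.mem_Ici.mpr (le_max_right _ _))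
      (max_le_max hst le_rfl)
  have hFbdd : BddAbove (Set.range F) := by
    refine ⟨B, ?_⟩
    rintro _ ⟨t, rfl⟩
    exact hB _ ℓ
  have hFt : Tendsto F atTop (𝓝 (⨆ t, F t)) := tendsto_atTop_ciSup hFmono hFbdd
  have hcongr : f =ᶠ[atTop] F := by
    filter_upwards [eventually_ge_atTop t₀] with t ht
    simp [hF_def, max_eq_left ht]
  refine ⟨⨆ t, F t, ?_, Tendsto.congr' hcongr.symm hFt⟩
  have : F t₀ ≤ ⨆ t, F t := le_ciSup hFbdd t₀
  have hFt₀ : F t₀ = f t₀ := by simp [hF_def]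
  linarith
end
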